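/- arXiv:2112.09675 — 3 statements merged into one kernel-verified Lean document; each statement's English description precedes it below -/
import Mathlib

section
/- The Riesz–Thorin-type interpolation on finite-dimensional spaces of simple functions fails for non-disjoint sets: with the measure space {0,1,2} with counting measure, E_1 = {0,1}, E_2 = {1,2}, X = span{χ_{E_1}, χ_{E_2}}, and T h = (h(0)+h(1)+h(2)) χ_{{0}}, one has ‖Th‖_{L^{q_0}} ≤ ‖h‖_{L^1} and ‖Th‖_{L^{q_1}} ≤ 2‖h‖_{L^∞} for all h ∈ X, yet for h = χ_{E_1} + χ_{E_2} the interpolated estimate ‖Th‖ ≤ 1^{1/2} 2^{1/2} ‖h‖_{L^2} fails. -/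
open MeasureTheory Filter ENNReal

noncomputable def T12 (h : Fin 3 → ℂ) : Fin 3 → ℂ :=
  Set.indicator ({0} : Set (Fin 3)) (fun _ => h 0 + h 1 + h 2)

lemma eT (h : Fin 3 → ℂ) (p : ℝ≥0∞) (hp : p ≠ 0) :
    eLpNorm (T12 h) p (Measure.count : Measure (Fin 3)) = ‖h 0 + h 1 + h 2‖₊ := by
  rw [T12, eLpNorm_indicator_const' (measurableSet_singleton _) (by simp) hp]
  simp [Measure.count_singleton]
  rfl

lemma memX (h : Fin 3 → ℂ)
    (hm : h ∈ Submodule.span ℂ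
      {Set.indicator ({0, 1} : Set (Fin 3)) (fun _ => (1:ℂ)),
       Set.indicator ({1, 2} : Set (Fin 3)) (fun _ => (1:ℂ))}) :
    h 1 = h 0 + h 2 := by
  rw [Submodule.mem_span_pair] at hm
  obtain ⟨a, b, rfl⟩ := hm
  simp [Set.indicator_apply]

lemma L1norm (h : Fin 3 → ℂ) :
    eLpNorm h 1 (Measure.count : Measure (Fin 3)) = ‖h 0‖₊ + ‖h 1‖₊ + ‖h 2‖₊ := by
  rw [eLpNorm_one_eq_lintegral_enorm, lintegral_count, tsum_fintype, Fin.sum_univ_three]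
  rfl

lemma L2norm (h : Fin 3 → ℂ) :
    eLpNorm h 2 (Measure.count : Measure (Fin 3)) =
      ((‖h 0‖₊ : ℝ≥0∞) ^ (2:ℝ) + ‖h 1‖₊ ^ (2:ℝ) + ‖h 2‖₊ ^ (2:ℝ)) ^ ((1:ℝ)/2) := by
  rw [eLpNorm_eq_lintegral_rpow_enorm_toReal two_ne_zero ENNReal.ofNat_ne_top, lintegral_count,
    tsum_fintype, Fin.sum_univ_three]
  norm_num
  rfl

theorem interpolation_fails_for_non_disjoint_sets (q₀ q₁ q : ℝ≥0∞) (hq₀ : 1 ≤ q₀) (hq₁ : 1 ≤ q₁) (hq : 1 ≤ q)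
    (X : Submodule ℂ (Fin 3 → ℂ))
    (hX : X = Submodule.span ℂ
      {Set.indicator ({0, 1} : Set (Fin 3)) (fun _ => (1:ℂ)),
       Set.indicator ({1, 2} : Set (Fin 3)) (fun _ => (1:ℂ))}) :
    (∀ h : Fin 3 → ℂ, h ∈ X →
      eLpNorm (T12 h) q₀ (Measure.count : Measure (Fin 3))
        ≤ 1 * eLpNorm h 1 (Measure.count : Measure (Fin 3))) ∧
    (∀ h : Fin 3 → ℂ, h ∈ X →
      eLpNorm (T12 h) q₁ (Measure.count : Measure (Fin 3))
        ≤ 2 * eLpNorm h ⊤ (Measure.count : Measure (Fin 3))) ∧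
    ¬ (eLpNorm
        (T12 (Set.indicator ({0, 1} : Set (Fin 3)) (fun _ => (1:ℂ))
              + Set.indicator ({1, 2} : Set (Fin 3)) (fun _ => (1:ℂ))))
        q (Measure.count : Measure (Fin 3))
      ≤ (1 : ℝ≥0∞) ^ ((1:ℝ)/2) * (2 : ℝ≥0∞) ^ ((1:ℝ)/2) *
        eLpNorm (Set.indicator ({0, 1} : Set (Fin 3)) (fun _ => (1:ℂ))
              + Set.indicator ({1, 2} : Set (Fin 3)) (fun _ => (1:ℂ)))
          2 (Measure.count : Measure (Fin 3))) := by
  have hq₀0 : q₀ ≠ 0 := by intro h; simp [h] at hq₀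
  have hq₁0 : q₁ ≠ 0 := by intro h; simp [h] at hq₁
  have hq0 : q ≠ 0 := by intro h; simp [h] at hq
  refine ⟨fun h _ => ?_, fun h hm => ?_, ?_⟩
  · rw [eT h q₀ hq₀0, L1norm, one_mul]
    calc (‖h 0 + h 1 + h 2‖₊ : ℝ≥0∞) ≤ ‖h 0 + h 1‖₊ + ‖h 2‖₊ := by
          exact_mod_cast ENNReal.coe_le_coe.mpr (nnnorm_add_le _ _)
      _ ≤ ‖h 0‖₊ + ‖h 1‖₊ + ‖h 2‖₊ := by
          gcongr; exact_mod_cast ENNReal.coe_le_coe.mpr (nnnorm_add_le _ _)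
  · rw [eT h q₁ hq₁0]
    have h1 : h 1 = h 0 + h 2 := memX h (hX ▸ hm)
    have : h 0 + h 1 + h 2 = 2 * h 1 := by rw [h1]; ring
    rw [this]
    have hsup : (‖h 1‖₊ : ℝ≥0∞) ≤ eLpNorm h ⊤ (Measure.count : Measure (Fin 3)) := by
      rw [eLpNorm_exponent_top, eLpNormEssSup, essSup_count]
      exact le_iSup (fun i => (‖h i‖₊ : ℝ≥0∞)) 1
    calc (‖(2:ℂ) * h 1‖₊ : ℝ≥0∞) = 2 * ‖h 1‖₊ := by
          push_cast [nnnorm_mul]; norm_num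
      _ ≤ 2 * eLpNorm h ⊤ (Measure.count : Measure (Fin 3)) := by gcongr
  · intro hle
    set e₁ := Set.indicator ({0, 1} : Set (Fin 3)) (fun _ => (1:ℂ))
    set e₂ := Set.indicator ({1, 2} : Set (Fin 3)) (fun _ => (1:ℂ))
    have hv0 : (e₁ + e₂) 0 = 1 := by simp [e₁, e₂, Set.indicator_apply]
    have hv1 : (e₁ + e₂) 1 = 2 := by norm_num [e₁, e₂, Set.indicator_apply]
    have hv2 : (e₁ + e₂) 2 = 1 := by simp [e₁, e₂, Set.indicator_apply]
    rw [eT _ q hq0, L2norm, hv0, hv1, hv2] at hle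
    norm_num at hle
    -- hle : (4:ℝ≥0∞) ≤ 1 ^ _ * 2 ^ _ * (1 + 2^2 + 1)^_ or similar
    have h2 : ((2:ℝ≥0∞)^((1:ℝ)/2)) * ((6:ℝ≥0∞)^((1:ℝ)/2)) = (12:ℝ≥0∞)^((1:ℝ)/2) := by
      rw [← ENNReal.mul_rpow_of_nonneg _ _ (by norm_num : (0:ℝ) ≤ 1/2)]
      norm_num
    have h16 : ((16:ℝ≥0∞):ℝ≥0∞)^((1:ℝ)/2) = 4 := by
      rw [show (16:ℝ≥0∞) = 4 ^ ((2:ℕ):ℝ) by rw [ENNReal.rpow_natCast]; norm_num,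
        ← ENNReal.rpow_mul]
      norm_num
    have hlt : (12:ℝ≥0∞)^((1:ℝ)/2) < 4 := by
      rw [← h16]
      exact ENNReal.rpow_lt_rpow (by norm_num) (by norm_num)
    rw [h2] at hle
    exact absurd hle (not_le.mpr hlt)
end

section
/- Let g ∈ L^2(R^d) \ {0}, Ω ⊂ R^{2d} measurable with 0 < |Ω| < ∞, and 1 ≤ p < ∞. Then the supremum over f ∈ L^2(R^d) \ {0} of (∫_Ω |A(f,g)(x,ω)|^p dx dω)^{1/p} / ‖f‖_{L^2} is attained; moreover every maximizing sequence normalized in L^2 has a subsequence converging in L^2 to a maximizer. -/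
open MeasureTheory Complex Filter Real

noncomputable def amb {d : ℕ} (f g : EuclideanSpace ℝ (Fin d) → ℂ)
    (x ω : EuclideanSpace ℝ (Fin d)) : ℂ :=
  ∫ t : EuclideanSpace ℝ (Fin d),
    f (t + (2:ℝ)⁻¹ • x) * (starRingEnd ℂ) (g (t - (2:ℝ)⁻¹ • x)) *
      Complex.exp (-(2 * Real.pi * Complex.I) * ((inner ℝ t ω : ℝ) : ℂ))

noncomputable def tfShift {d : ℕ} (x ω : EuclideanSpace ℝ (Fin d))
    (f : EuclideanSpace ℝ (Fin d) → ℂ) : EuclideanSpace ℝ (Fin d) → ℂ :=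
  fun t => Complex.exp ((2 * Real.pi * Complex.I) * ((inner ℝ t ω : ℝ) : ℂ)) * f (t - x)
open scoped ENNReal
open TopologicalSpace

namespace AmbProof


variable {d : ℕ}

local notation "𝔼" => EuclideanSpace ℝ (Fin d)

/-- The window function whose L² inner ℂ product with `f` gives `amb f g x ω`. -/
noncomputable def Kf (g : 𝔼 → ℂ) (x ω : 𝔼) : 𝔼 → ℂ := fun u =>
  Complex.exp ((2 * Real.pi * Complex.I) * ((inner ℝ (u - (2:ℝ)⁻¹ • x) ω : ℝ) : ℂ)) * g (u - x)

lemma norm_Kf (g : 𝔼 → ℂ) (x ω u : 𝔼) : ‖Kf g x ω u‖ = ‖g (u - x)‖ := by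
  unfold Kf
  rw [norm_mul, Complex.norm_exp]
  have : ((2 * Real.pi * Complex.I) * ((inner ℝ (u - (2:ℝ)⁻¹ • x) ω : ℝ) : ℂ)).re = 0 := by
    simp [Complex.mul_re, Complex.mul_im]
  rw [this, Real.exp_zero, one_mul]

lemma conj_exp_phase (r : ℝ) :
    (starRingEnd ℂ) (Complex.exp ((2 * Real.pi * Complex.I) * (r : ℂ)))
      = Complex.exp (-(2 * Real.pi * Complex.I) * (r : ℂ)) := by
  rw [← Complex.exp_conj]
  congr 1
  simp only [map_mul, map_ofNat, Complex.conj_ofReal, Complex.conj_I]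
  ring

lemma amb_eq_intK (f g : 𝔼 → ℂ) (x ω : 𝔼) :
    amb f g x ω = ∫ u, (starRingEnd ℂ) (Kf g x ω u) * f u := by
  have key : ∀ t : 𝔼,
      f (t + (2:ℝ)⁻¹ • x) * (starRingEnd ℂ) (g (t - (2:ℝ)⁻¹ • x)) *
        Complex.exp (-(2 * Real.pi * Complex.I) * ((inner ℝ t ω : ℝ) : ℂ))
      = (fun u => (starRingEnd ℂ) (Kf g x ω u) * f u) (t + (2:ℝ)⁻¹ • x) := by
    intro t
    have h1 : t + (2:ℝ)⁻¹ • x - x = t - (2:ℝ)⁻¹ • x := by module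
    have h2 : t + (2:ℝ)⁻¹ • x - (2:ℝ)⁻¹ • x = t := by module
    simp only [Kf, h1, h2, map_mul, conj_exp_phase]
    ring
  calc amb f g x ω = ∫ t, (fun u => (starRingEnd ℂ) (Kf g x ω u) * f u) (t + (2:ℝ)⁻¹ • x) := by
        unfold amb; exact integral_congr_ae (Filter.Eventually.of_forall key)
    _ = ∫ u, (starRingEnd ℂ) (Kf g x ω u) * f u :=
        integral_add_right_eq_self (μ := volume)
          (fun u => (starRingEnd ℂ) (Kf g x ω u) * f u) ((2:ℝ)⁻¹ • x)

lemma amb_congr_left {f f' : 𝔼 → ℂ} (h : f =ᵐ[volume] f') (g : 𝔼 → ℂ) (x ω : 𝔼) :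
    amb f g x ω = amb f' g x ω := by
  rw [amb_eq_intK, amb_eq_intK]
  refine integral_congr_ae ?_
  filter_upwards [h] with u hu
  rw [hu]

lemma amb_zero (g : 𝔼 → ℂ) (x ω : 𝔼) : amb (fun _ => (0:ℂ)) g x ω = 0 := by
  unfold amb; simp

lemma eLpNorm_Kf (g : 𝔼 → ℂ) (hg : AEStronglyMeasurable g volume) (x ω : 𝔼) :
    eLpNorm (Kf g x ω) 2 volume = eLpNorm g 2 volume := by
  have h1 : eLpNorm (Kf g x ω) 2 volume = eLpNorm (fun u => g (u - x)) 2 volume := by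
    rw [← eLpNorm_norm (Kf g x ω), ← eLpNorm_norm (fun u => g (u - x))]
    congr 1
    funext u
    exact norm_Kf g x ω u
  rw [h1]
  exact eLpNorm_comp_measurePreserving hg (measurePreserving_sub_right volume x)

lemma aesm_shift (g : 𝔼 → ℂ) (hg : AEStronglyMeasurable g volume) (x : 𝔼) :
    AEStronglyMeasurable (fun u : 𝔼 => g (u - x)) volume :=
  hg.comp_quasiMeasurePreserving (measurePreserving_sub_right volume x).quasiMeasurePreserving

lemma continuous_phase (x ω : 𝔼) :
    Continuous (fun u : 𝔼 => Complex.exp ((2 * Real.pi * Complex.I) *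
      ((inner ℝ (u - (2:ℝ)⁻¹ • x) ω : ℝ) : ℂ))) := by
  apply Complex.continuous_exp.comp
  apply Continuous.mul continuous_const
  exact Complex.continuous_ofReal.comp
    ((continuous_id.sub continuous_const).inner continuous_const)

lemma memLp_Kf {g : 𝔼 → ℂ} (hg : MemLp g 2 volume) (x ω : 𝔼) :
    MemLp (Kf g x ω) 2 volume := by
  refine ⟨((continuous_phase x ω).aestronglyMeasurable).mul (aesm_shift g hg.1 x), ?_⟩
  rw [eLpNorm_Kf g hg.1 x ω]
  exact hg.2

local notation "H" => Lp (α := 𝔼) ℂ 2 (volume : Measure 𝔼)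

/-- `Kf` as an element of `L²`. -/
noncomputable def Kl {g : 𝔼 → ℂ} (hg : MemLp g 2 volume) (x ω : 𝔼) : H :=
  (memLp_Kf hg x ω).toLp _

lemma norm_Kl {g : 𝔼 → ℂ} (hg : MemLp g 2 volume) (x ω : 𝔼) :
    ‖Kl hg x ω‖ = (eLpNorm g 2 volume).toReal := by
  rw [Kl, Lp.norm_toLp, eLpNorm_Kf g hg.1 x ω]

lemma amb_inner {g : 𝔼 → ℂ} (hg : MemLp g 2 volume) (f : H) (x ω : 𝔼) :
    amb (⇑f) g x ω = (inner ℂ (Kl hg x ω) f : ℂ) := by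
  rw [amb_eq_intK, L2.inner_def]
  refine integral_congr_ae ?_
  filter_upwards [MemLp.coeFn_toLp (memLp_Kf hg x ω)] with u hu
  rw [show (inner ℂ ((Kl hg x ω) u) (f u) : ℂ) = (starRingEnd ℂ) ((Kl hg x ω) u) * f u from RCLike.inner_apply' _ _,
    show ((Kl hg x ω) : 𝔼 → ℂ) u = Kf g x ω u from hu]

lemma norm_amb_le {g : 𝔼 → ℂ} (hg : MemLp g 2 volume) (f : H) (x ω : 𝔼) :
    ‖amb (⇑f) g x ω‖ ≤ (eLpNorm g 2 volume).toReal * ‖f‖ := by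
  rw [amb_inner hg f x ω]
  calc ‖(inner ℂ (Kl hg x ω) f : ℂ)‖ ≤ ‖Kl hg x ω‖ * ‖f‖ := norm_inner_le_norm _ _
    _ = (eLpNorm g 2 volume).toReal * ‖f‖ := by rw [norm_Kl]

lemma aesm_amb {g : 𝔼 → ℂ} (hg : MemLp g 2 volume) (f : H) :
    AEStronglyMeasurable (fun w : 𝔼 × 𝔼 => amb (⇑f) g w.1 w.2)
      (volume : Measure (𝔼 × 𝔼)) := by
  have heq : (fun w : 𝔼 × 𝔼 => amb (⇑f) g w.1 w.2)
      = fun w : 𝔼 × 𝔼 => ∫ u, (starRingEnd ℂ) (Kf g w.1 w.2 u) * f u :=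
    funext fun w => amb_eq_intK _ _ _ _
  rw [heq, Measure.volume_eq_prod]
  apply MeasureTheory.AEStronglyMeasurable.integral_prod_right'
    (f := fun q : (𝔼 × 𝔼) × 𝔼 => (starRingEnd ℂ) (Kf g q.1.1 q.1.2 q.2) * f q.2)
  -- joint a.e.-strong measurability on the product
  have hT : MeasurePreserving (fun q : (𝔼 × 𝔼) × 𝔼 => (q.1, q.2 - q.1.1))
      (((volume : Measure (𝔼 × 𝔼))).prod (volume : Measure 𝔼))
      (((volume : Measure (𝔼 × 𝔼))).prod (volume : Measure 𝔼)) := by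
    have h0 : Measurable (Function.uncurry fun (w : 𝔼 × 𝔼) (u : 𝔼) => u - w.1) :=
      measurable_snd.sub (measurable_fst.comp measurable_fst)
    have h1 := MeasurePreserving.skew_product
      (MeasurePreserving.id (volume : Measure (𝔼 × 𝔼))) h0
      (Filter.Eventually.of_forall fun w : 𝔼 × 𝔼 =>
        (measurePreserving_sub_right volume w.1).map_eq)
    simpa using h1
  have hsub : Measure.QuasiMeasurePreserving (fun q : (𝔼 × 𝔼) × 𝔼 => q.2 - q.1.1)
      (((volume : Measure (𝔼 × 𝔼))).prod (volume : Measure 𝔼)) (volume : Measure 𝔼) :=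
    Measure.quasiMeasurePreserving_snd.comp hT.quasiMeasurePreserving
  have hgpart : AEStronglyMeasurable (fun q : (𝔼 × 𝔼) × 𝔼 => g (q.2 - q.1.1))
      (((volume : Measure (𝔼 × 𝔼))).prod (volume : Measure 𝔼)) :=
    hg.1.comp_quasiMeasurePreserving hsub
  have hfpart : AEStronglyMeasurable (fun q : (𝔼 × 𝔼) × 𝔼 => f q.2)
      (((volume : Measure (𝔼 × 𝔼))).prod (volume : Measure 𝔼)) :=
    (Lp.aestronglyMeasurable f).comp_quasiMeasurePreserving
      Measure.quasiMeasurePreserving_snd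
  have hphase : Continuous (fun q : (𝔼 × 𝔼) × 𝔼 =>
      Complex.exp ((2 * Real.pi * Complex.I) *
        ((inner ℝ (q.2 - (2:ℝ)⁻¹ • q.1.1) q.1.2 : ℝ) : ℂ))) := by
    apply Complex.continuous_exp.comp
    apply Continuous.mul continuous_const
    apply Complex.continuous_ofReal.comp
    fun_prop
  have : (fun q : (𝔼 × 𝔼) × 𝔼 => (starRingEnd ℂ) (Kf g q.1.1 q.1.2 q.2) * f q.2)
      = fun q => ((starRingEnd ℂ) (Complex.exp ((2 * Real.pi * Complex.I) *
          ((inner ℝ (q.2 - (2:ℝ)⁻¹ • q.1.1) q.1.2 : ℝ) : ℂ))) *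
        (starRingEnd ℂ) (g (q.2 - q.1.1))) * f q.2 := by
    funext q; rw [Kf]; simp [map_mul]
  rw [this]
  exact ((Complex.continuous_conj.comp hphase).aestronglyMeasurable.mul
    (Complex.continuous_conj.aestronglyMeasurable.comp_aemeasurable hgpart.aemeasurable)).mul hfpart
section Int

lemma finite_restrict {Ω : Set (𝔼 × 𝔼)} (hΩfin : volume Ω < ⊤) :
    IsFiniteMeasure ((volume : Measure (𝔼 × 𝔼)).restrict Ω) :=
  ⟨by rwa [Measure.restrict_apply_univ]⟩

lemma aesm_ambpow {g : 𝔼 → ℂ} {Ω : Set (𝔼 × 𝔼)} {p : ℝ}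
    (hg : MemLp g 2 volume) (hp : 1 ≤ p) (f : H) :
    AEStronglyMeasurable (fun w : 𝔼 × 𝔼 => ‖amb (⇑f) g w.1 w.2‖ ^ p)
      ((volume : Measure (𝔼 × 𝔼)).restrict Ω) := by
  have h1 : Continuous (fun x : ℝ => x ^ p) :=
    Real.continuous_rpow_const (le_trans zero_le_one hp)
  exact h1.comp_aestronglyMeasurable ((aesm_amb hg f).norm.restrict)

lemma integrable_ambpow {g : 𝔼 → ℂ} {Ω : Set (𝔼 × 𝔼)} {p : ℝ}
    (hg : MemLp g 2 volume) (hΩfin : volume Ω < ⊤) (hp : 1 ≤ p) (f : H) :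
    Integrable (fun w : 𝔼 × 𝔼 => ‖amb (⇑f) g w.1 w.2‖ ^ p)
      ((volume : Measure (𝔼 × 𝔼)).restrict Ω) := by
  haveI := finite_restrict hΩfin
  refine ⟨aesm_ambpow hg hp f, HasFiniteIntegral.of_bounded
    (C := ((eLpNorm g 2 volume).toReal * ‖f‖) ^ p) ?_⟩
  refine Filter.Eventually.of_forall fun w => ?_
  rw [Real.norm_eq_abs, _root_.abs_of_nonneg (Real.rpow_nonneg (norm_nonneg _) p)]
  exact Real.rpow_le_rpow (norm_nonneg _) (norm_amb_le hg f w.1 w.2)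
    (le_trans zero_le_one hp)

/-- Weak convergence implies convergence of the concentration functional. -/
lemma tendsto_Phi {g : 𝔼 → ℂ} {Ω : Set (𝔼 × 𝔼)} {p : ℝ}
    (hg : MemLp g 2 volume) (hΩfin : volume Ω < ⊤) (hp : 1 ≤ p)
    {fn : ℕ → H} {h : H} (hb : ∀ n, ‖fn n‖ ≤ 1)
    (hw : ∀ y : H, Tendsto (fun n => (inner ℂ y (fn n) : ℂ)) atTop (nhds (inner ℂ y h))) :
    Tendsto (fun n => ∫ w in Ω, ‖amb (⇑(fn n)) g w.1 w.2‖ ^ p) atTop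
      (nhds (∫ w in Ω, ‖amb (⇑h) g w.1 w.2‖ ^ p)) := by
  haveI := finite_restrict hΩfin
  apply tendsto_integral_of_dominated_convergence
    (bound := fun _ => ((eLpNorm g 2 volume).toReal * 1) ^ p)
  · exact fun n => aesm_ambpow hg hp (fn n)
  · exact integrable_const _
  · intro n
    refine Filter.Eventually.of_forall fun w => ?_
    rw [Real.norm_eq_abs, _root_.abs_of_nonneg (Real.rpow_nonneg (norm_nonneg _) p)]
    refine Real.rpow_le_rpow (norm_nonneg _) ?_ (le_trans zero_le_one hp)
    calc ‖amb (⇑(fn n)) g w.1 w.2‖ ≤ (eLpNorm g 2 volume).toReal * ‖fn n‖ :=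
          norm_amb_le hg (fn n) w.1 w.2
      _ ≤ (eLpNorm g 2 volume).toReal * 1 := by
          exact mul_le_mul_of_nonneg_left (hb n) ENNReal.toReal_nonneg
  · refine Filter.Eventually.of_forall fun w => ?_
    have h1 : Continuous (fun z : ℂ => ‖z‖ ^ p) :=
      (Real.continuous_rpow_const (le_trans zero_le_one hp)).comp continuous_norm
    have h2 : Tendsto (fun n => amb (⇑(fn n)) g w.1 w.2) atTop
        (nhds (amb (⇑h) g w.1 w.2)) := by
      simp only [amb_inner hg _ w.1 w.2]
      exact hw (Kl hg w.1 w.2)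
    exact (h1.tendsto _).comp h2
end Int

/-- Weak sequential compactness of the closed unit ball of `L²`. -/
lemma weak_compact (f : ℕ → H) (hb : ∀ n, ‖f n‖ ≤ 1) :
    ∃ (φ : ℕ → ℕ) (h : H), StrictMono φ ∧ ‖h‖ ≤ 1 ∧
      ∀ y : H, Tendsto (fun n => (inner ℂ y (f (φ n)) : ℂ)) atTop (nhds (inner ℂ y h)) := by
  haveI : SecondCountableTopology H := by
    haveI : Fact ((2:ℝ≥0∞) ≠ ∞) := ⟨by norm_num⟩
    exact MeasureTheory.Lp.SecondCountableTopology
  have hne : Nonempty H := ⟨0⟩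
  set e : ℕ → H := denseSeq H with he
  have hd : DenseRange e := denseRange_denseSeq H
  set S : Set (ℕ → ℂ) := Set.univ.pi fun k => Metric.closedBall (0:ℂ) ‖e k‖ with hS
  have hSc : IsCompact S := isCompact_univ_pi fun k => isCompact_closedBall _ _
  have hmem : ∀ n, (fun k => (inner ℂ (e k) (f n) : ℂ)) ∈ S := by
    intro n k _
    simp only [Metric.mem_closedBall, dist_zero_right]
    calc ‖(inner ℂ (e k) (f n) : ℂ)‖ ≤ ‖e k‖ * ‖f n‖ := norm_inner_le_norm _ _
      _ ≤ ‖e k‖ * 1 := mul_le_mul_of_nonneg_left (hb n) (norm_nonneg _)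
      _ = ‖e k‖ := mul_one _
  obtain ⟨u, -, φ, hφ, hu⟩ := hSc.isSeqCompact hmem
  have hcomp : ∀ k, Tendsto (fun n => (inner ℂ (e k) (f (φ n)) : ℂ)) atTop (nhds (u k)) :=
    fun k => (tendsto_pi_nhds.1 hu k)
  -- each inner ℂ sequence is Cauchy
  have key : ∀ y : H, ∃ c : ℂ, Tendsto (fun n => (inner ℂ y (f (φ n)) : ℂ)) atTop (nhds c) := by
    intro y
    have hC : CauchySeq (fun n => (inner ℂ y (f (φ n)) : ℂ)) := by
      rw [Metric.cauchySeq_iff]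
      intro ε hε
      obtain ⟨k, hk⟩ := hd.exists_dist_lt y (show (0:ℝ) < ε/4 by linarith)
      have hck : CauchySeq (fun n => (inner ℂ (e k) (f (φ n)) : ℂ)) := (hcomp k).cauchySeq
      obtain ⟨N, hN⟩ := Metric.cauchySeq_iff.1 hck (ε/2) (by linarith)
      refine ⟨N, fun m hm n hn => ?_⟩
      have hyk : ∀ j, dist (inner ℂ y (f (φ j)) : ℂ) (inner ℂ (e k) (f (φ j)) : ℂ) < ε/4 := by
        intro j
        rw [dist_eq_norm, ← inner_sub_left]
        calc ‖(inner ℂ (y - e k) (f (φ j)) : ℂ)‖ ≤ ‖y - e k‖ * ‖f (φ j)‖ := norm_inner_le_norm _ _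
          _ ≤ ‖y - e k‖ * 1 := mul_le_mul_of_nonneg_left (hb _) (norm_nonneg _)
          _ = dist y (e k) := by rw [mul_one, dist_eq_norm]
          _ < ε/4 := hk
      calc dist (inner ℂ y (f (φ m)) : ℂ) (inner ℂ y (f (φ n)) : ℂ)
          ≤ dist (inner ℂ y (f (φ m)) : ℂ) (inner ℂ (e k) (f (φ m)) : ℂ)
            + dist (inner ℂ (e k) (f (φ m)) : ℂ) (inner ℂ (e k) (f (φ n)) : ℂ)
            + dist (inner ℂ (e k) (f (φ n)) : ℂ) (inner ℂ y (f (φ n)) : ℂ) :=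
            dist_triangle4 _ _ _ _
        _ < ε/4 + ε/2 + ε/4 := by
            have := hN m hm n hn
            have h2 := hyk m
            have h3 := hyk n
            rw [dist_comm] at h3
            linarith
        _ = ε := by ring
    exact cauchySeq_tendsto_of_complete hC
  choose L hL using key
  have hadd : ∀ y z : H, L (y + z) = L y + L z := by
    intro y z
    refine tendsto_nhds_unique ?_ ((hL y).add (hL z))
    have : (fun n => (inner ℂ (y + z) (f (φ n)) : ℂ))
        = fun n => (inner ℂ y (f (φ n)) : ℂ) + (inner ℂ z (f (φ n)) : ℂ) := by
      funext n; rw [inner_add_left]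
    rw [← this]; exact hL (y + z)
  have hsmul : ∀ (a : ℂ) (y : H), L (a • y) = (starRingEnd ℂ) a * L y := by
    intro a y
    refine tendsto_nhds_unique ?_ ((hL y).const_mul ((starRingEnd ℂ) a))
    have : (fun n => (inner ℂ (a • y) (f (φ n)) : ℂ))
        = fun n => (starRingEnd ℂ) a * (inner ℂ y (f (φ n)) : ℂ) := by
      funext n; rw [inner_smul_left]
    rw [← this]; exact hL (a • y)
  have hLbd : ∀ y : H, ‖L y‖ ≤ ‖y‖ := by
    intro y
    refine le_of_tendsto (hL y).norm (Filter.Eventually.of_forall fun n => ?_)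
    calc ‖(inner ℂ y (f (φ n)) : ℂ)‖ ≤ ‖y‖ * ‖f (φ n)‖ := norm_inner_le_norm _ _
      _ ≤ ‖y‖ * 1 := mul_le_mul_of_nonneg_left (hb _) (norm_nonneg _)
      _ = ‖y‖ := mul_one _
  let ℓ₀ : H →ₗ[ℂ] ℂ :=
    { toFun := fun y => (starRingEnd ℂ) (L y)
      map_add' := by
        intro y z
        show (starRingEnd ℂ) (L (y + z)) = (starRingEnd ℂ) (L y) + (starRingEnd ℂ) (L z)
        rw [hadd, map_add]
      map_smul' := by
        intro a y
        show (starRingEnd ℂ) (L (a • y)) = a • (starRingEnd ℂ) (L y)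
        rw [hsmul, map_mul, Complex.conj_conj, smul_eq_mul] }
  have hbd : ∀ y : H, ‖ℓ₀ y‖ ≤ 1 * ‖y‖ := by
    intro y
    rw [one_mul]
    calc ‖ℓ₀ y‖ = ‖L y‖ := RCLike.norm_conj _
      _ ≤ ‖y‖ := hLbd y
  let ℓ : H →L[ℂ] ℂ := ℓ₀.mkContinuous 1 hbd
  set h : H := (InnerProductSpace.toDual ℂ H).symm ℓ with hh
  have hinner : ∀ y : H, (inner ℂ y h : ℂ) = L y := by
    intro y
    have h1 : (inner ℂ h y : ℂ) = ℓ y := InnerProductSpace.toDual_symm_apply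
    have h2 : (inner ℂ y h : ℂ) = (starRingEnd ℂ) (inner ℂ h y : ℂ) := (inner_conj_symm _ _).symm
    rw [h2, h1]
    show (starRingEnd ℂ) ((starRingEnd ℂ) (L y)) = L y
    exact Complex.conj_conj _
  have hwk : ∀ y : H, Tendsto (fun n => (inner ℂ y (f (φ n)) : ℂ)) atTop (nhds (inner ℂ y h)) := by
    intro y; rw [hinner y]; exact hL y
  refine ⟨φ, h, hφ, ?_, hwk⟩
  have h1 : ‖h‖ ^ 2 ≤ ‖h‖ := by
    have e1 : RCLike.re (inner ℂ h h : ℂ) = ‖h‖ ^ 2 := inner_self_eq_norm_sq h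
    have e2 : RCLike.re (inner ℂ h h : ℂ) ≤ ‖(inner ℂ h h : ℂ)‖ := RCLike.re_le_norm _
    have e3 : ‖(inner ℂ h h : ℂ)‖ = ‖L h‖ := by rw [hinner h]
    have := hLbd h
    linarith
  nlinarith [norm_nonneg h]
def Sset (g : 𝔼 → ℂ) (Ω : Set (𝔼 × 𝔼)) (p : ℝ) : Set ℝ :=
  {r : ℝ | ∃ f' : 𝔼 → ℂ,
      MemLp f' 2 volume ∧ eLpNorm f' 2 volume ≠ 0 ∧
      r = (∫ w in Ω, ‖amb f' g w.1 w.2‖ ^ p) ^ (1/p) / (eLpNorm f' 2 volume).toReal}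

lemma integral_ambpow_nonneg (g f : 𝔼 → ℂ) (Ω : Set (𝔼 × 𝔼)) (p : ℝ) :
    0 ≤ ∫ w in Ω, ‖amb f g w.1 w.2‖ ^ p :=
  integral_nonneg fun w => Real.rpow_nonneg (norm_nonneg _) p

lemma Sset_nonneg {g : 𝔼 → ℂ} {Ω : Set (𝔼 × 𝔼)} {p : ℝ} {r : ℝ} (hr : r ∈ Sset g Ω p) :
    0 ≤ r := by
  obtain ⟨f', _, _, rfl⟩ := hr
  exact div_nonneg (Real.rpow_nonneg (integral_ambpow_nonneg g f' Ω p) _) ENNReal.toReal_nonneg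

lemma Sset_bddAbove {g : 𝔼 → ℂ} {Ω : Set (𝔼 × 𝔼)} {p : ℝ}
    (hg : MemLp g 2 volume) (hΩfin : volume Ω < ⊤) (hp : 1 ≤ p) :
    BddAbove (Sset g Ω p) := by
  have hp0 : (0:ℝ) < p := lt_of_lt_of_le zero_lt_one hp
  set Ng : ℝ := (eLpNorm g 2 volume).toReal with hNg
  set V : ℝ := ((volume : Measure (𝔼 × 𝔼)) Ω).toReal with hV
  refine ⟨Ng * V ^ (1/p), ?_⟩
  rintro r ⟨f', hf', hf'0, rfl⟩
  set Nf : ℝ := (eLpNorm f' 2 volume).toReal with hNf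
  have hNfpos : 0 < Nf := ENNReal.toReal_pos hf'0 hf'.2.ne
  set fl := hf'.toLp f' with hfl
  have hnfl : ‖fl‖ = Nf := Lp.norm_toLp _ _
  have hcong : ∀ w : 𝔼 × 𝔼, amb f' g w.1 w.2 = amb (⇑fl) g w.1 w.2 :=
    fun w => amb_congr_left (hf'.coeFn_toLp).symm g w.1 w.2
  haveI : IsFiniteMeasure ((volume : Measure (𝔼 × 𝔼)).restrict Ω) :=
    ⟨by rwa [Measure.restrict_apply_univ]⟩
  have hInt : (∫ w in Ω, ‖amb f' g w.1 w.2‖ ^ p) ≤ (Ng * Nf) ^ p * V := by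
    have hb : ∀ w : 𝔼 × 𝔼, ‖amb f' g w.1 w.2‖ ^ p ≤ (Ng * Nf) ^ p := by
      intro w
      refine Real.rpow_le_rpow (norm_nonneg _) ?_ hp0.le
      rw [hcong w]
      calc ‖amb (⇑fl) g w.1 w.2‖ ≤ Ng * ‖fl‖ := norm_amb_le hg fl w.1 w.2
        _ = Ng * Nf := by rw [hnfl]
    calc (∫ w in Ω, ‖amb f' g w.1 w.2‖ ^ p)
        ≤ ∫ _w in Ω, (Ng * Nf) ^ p := by
          refine integral_mono_of_nonneg
            (Filter.Eventually.of_forall fun w => Real.rpow_nonneg (norm_nonneg _) p)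
            (integrable_const _) (Filter.Eventually.of_forall hb)
      _ = (Ng * Nf) ^ p * V := by
          rw [integral_const, measureReal_restrict_apply_univ, smul_eq_mul, mul_comm]; rfl
  have hNg0 : 0 ≤ Ng := ENNReal.toReal_nonneg
  have hV0 : 0 ≤ V := ENNReal.toReal_nonneg
  have h1 : (∫ w in Ω, ‖amb f' g w.1 w.2‖ ^ p) ^ (1/p) ≤ (Ng * Nf) * V ^ (1/p) := by
    calc (∫ w in Ω, ‖amb f' g w.1 w.2‖ ^ p) ^ (1/p)
        ≤ ((Ng * Nf) ^ p * V) ^ (1/p) :=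
          Real.rpow_le_rpow (integral_ambpow_nonneg g f' Ω p) hInt (by positivity)
      _ = ((Ng * Nf) ^ p) ^ (1/p) * V ^ (1/p) :=
          Real.mul_rpow (Real.rpow_nonneg (by positivity) p) hV0
      _ = (Ng * Nf) * V ^ (1/p) := by
          rw [← Real.rpow_mul (by positivity), mul_one_div, div_self hp0.ne', Real.rpow_one]
  calc (∫ w in Ω, ‖amb f' g w.1 w.2‖ ^ p) ^ (1/p) / Nf
      ≤ ((Ng * Nf) * V ^ (1/p)) / Nf := by
        gcongr

    _ = Ng * V ^ (1/p) := by field_simp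

lemma Sset_nonempty {g : 𝔼 → ℂ} {Ω : Set (𝔼 × 𝔼)} {p : ℝ}
    (hg : MemLp g 2 volume) (hg0 : eLpNorm g 2 volume ≠ 0) :
    (Sset g Ω p).Nonempty :=
  ⟨_, g, hg, hg0, rfl⟩

lemma sSup_Sset_pos {g : 𝔼 → ℂ} {Ω : Set (𝔼 × 𝔼)} {p : ℝ}
    (hg : MemLp g 2 volume) (hg0 : eLpNorm g 2 volume ≠ 0)
    (hΩ0 : 0 < volume Ω) (hΩfin : volume Ω < ⊤) (hp : 1 ≤ p) :
    0 < sSup (Sset g Ω p) := by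
  have hp0 : (0:ℝ) < p := lt_of_lt_of_le zero_lt_one hp
  rcases lt_or_ge 0 (sSup (Sset g Ω p)) with hpos | hle
  · exact hpos
  exfalso
  have hbdd := Sset_bddAbove hg hΩfin hp
  have hzero : ∀ r ∈ Sset g Ω p, r = 0 := fun r hr =>
    le_antisymm ((le_csSup hbdd hr).trans hle) (Sset_nonneg hr)
  haveI : SecondCountableTopology H := by
    haveI : Fact ((2:ℝ≥0∞) ≠ ∞) := ⟨by norm_num⟩
    exact MeasureTheory.Lp.SecondCountableTopology
  haveI : Nonempty H := ⟨0⟩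
  set e : ℕ → H := denseSeq H with he
  have hae : ∀ k, ∀ᵐ w : 𝔼 × 𝔼 ∂((volume : Measure (𝔼 × 𝔼)).restrict Ω),
      (inner ℂ (Kl hg w.1 w.2) (e k) : ℂ) = 0 := by
    intro k
    by_cases hek : eLpNorm (⇑(e k)) 2 volume = 0
    · have hek0 : e k = 0 := by
        have : ‖e k‖ = 0 := by rw [Lp.norm_def, hek]; simp
        exact norm_eq_zero.1 this
      exact Filter.Eventually.of_forall fun w => by rw [hek0, inner_zero_right]
    · have hmem : (∫ w in Ω, ‖amb (⇑(e k)) g w.1 w.2‖ ^ p) ^ (1/p)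
          / (eLpNorm (⇑(e k)) 2 volume).toReal ∈ Sset g Ω p :=
        ⟨⇑(e k), Lp.memLp _, hek, rfl⟩
      have h0 := hzero _ hmem
      have hNpos : 0 < (eLpNorm (⇑(e k)) 2 volume).toReal :=
        ENNReal.toReal_pos hek (Lp.eLpNorm_ne_top (e k))
      have h1 : (∫ w in Ω, ‖amb (⇑(e k)) g w.1 w.2‖ ^ p) ^ (1/p) = 0 := by
        rw [div_eq_zero_iff] at h0
        rcases h0 with h0 | h0
        · exact h0
        · exact absurd h0 hNpos.ne'
      have hI0 : (∫ w in Ω, ‖amb (⇑(e k)) g w.1 w.2‖ ^ p) = 0 := by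
        by_contra hne
        have hgt : 0 < ∫ w in Ω, ‖amb (⇑(e k)) g w.1 w.2‖ ^ p :=
          lt_of_le_of_ne (integral_ambpow_nonneg g _ Ω p) (Ne.symm hne)
        have := Real.rpow_pos_of_pos hgt (1/p)
        linarith [h1 ▸ this]
      have haez := (integral_eq_zero_iff_of_nonneg_ae
        (Filter.Eventually.of_forall fun w => Real.rpow_nonneg (norm_nonneg _) p)
        (integrable_ambpow hg hΩfin hp (e k))).1 hI0
      filter_upwards [haez] with w hw
      have hn0 : ‖amb (⇑(e k)) g w.1 w.2‖ = 0 := by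
        by_contra hne
        have hpos2 : 0 < ‖amb (⇑(e k)) g w.1 w.2‖ :=
          lt_of_le_of_ne (norm_nonneg _) (Ne.symm hne)
        have := Real.rpow_pos_of_pos hpos2 p
        have hw' : ‖amb (⇑(e k)) g w.1 w.2‖ ^ p = 0 := hw
        linarith
      rw [← amb_inner hg (e k) w.1 w.2]
      exact norm_eq_zero.1 hn0
  have hall : ∀ᵐ w : 𝔼 × 𝔼 ∂((volume : Measure (𝔼 × 𝔼)).restrict Ω),
      ∀ k, (inner ℂ (Kl hg w.1 w.2) (e k) : ℂ) = 0 := ae_all_iff.2 hae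
  have hU : ((volume : Measure (𝔼 × 𝔼)).restrict Ω) Set.univ ≠ 0 := by
    rw [Measure.restrict_apply_univ]; exact hΩ0.ne'
  have hcompl : ((volume : Measure (𝔼 × 𝔼)).restrict Ω)
      {w : 𝔼 × 𝔼 | ¬ ∀ k, (inner ℂ (Kl hg w.1 w.2) (e k) : ℂ) = 0} = 0 := hall
  have hSne : ((volume : Measure (𝔼 × 𝔼)).restrict Ω)
      {w : 𝔼 × 𝔼 | ∀ k, (inner ℂ (Kl hg w.1 w.2) (e k) : ℂ) = 0} ≠ 0 := by
    intro h0
    apply hU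
    have hsub : (Set.univ : Set (𝔼 × 𝔼)) ⊆
        {w : 𝔼 × 𝔼 | ∀ k, (inner ℂ (Kl hg w.1 w.2) (e k) : ℂ) = 0} ∪
        {w : 𝔼 × 𝔼 | ¬ ∀ k, (inner ℂ (Kl hg w.1 w.2) (e k) : ℂ) = 0} := by
      intro w _
      by_cases hw : ∀ k, (inner ℂ (Kl hg w.1 w.2) (e k) : ℂ) = 0
      · exact Or.inl hw
      · exact Or.inr hw
    refine le_antisymm ?_ zero_le
    calc ((volume : Measure (𝔼 × 𝔼)).restrict Ω) Set.univ
        ≤ _ := measure_mono hsub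
      _ ≤ _ + _ := measure_union_le _ _
      _ = 0 := by rw [h0, hcompl, add_zero]
  obtain ⟨w, hw⟩ := nonempty_of_measure_ne_zero hSne
  have hKw : ∀ y : H, (inner ℂ (Kl hg w.1 w.2) y : ℂ) = 0 := by
    have hcont : Continuous fun y : H => (inner ℂ (Kl hg w.1 w.2) y : ℂ) :=
      continuous_const.inner continuous_id
    have heqon : Set.EqOn (fun y : H => (inner ℂ (Kl hg w.1 w.2) y : ℂ))
        (fun _ : H => (0:ℂ)) (Set.range e) := by
      rintro - ⟨k, rfl⟩
      exact hw k
    have heq := Continuous.ext_on (denseRange_denseSeq H) hcont continuous_const heqon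
    exact fun y => congrFun heq y
  have hK0 : Kl hg w.1 w.2 = 0 := inner_self_eq_zero.1 (hKw _)
  have htr : (eLpNorm g 2 volume).toReal = 0 := by
    rw [← norm_Kl hg w.1 w.2, hK0, norm_zero]
  rw [ENNReal.toReal_eq_zero_iff] at htr
  rcases htr with htr | htr
  · exact hg0 htr
  · exact hg.2.ne htr

lemma subseq_lemma {g : 𝔼 → ℂ} {Ω : Set (𝔼 × 𝔼)} {p : ℝ}
    (hg : MemLp g 2 volume) (hg0 : eLpNorm g 2 volume ≠ 0)
    (hΩ0 : 0 < volume Ω) (hΩfin : volume Ω < ⊤) (hp : 1 ≤ p)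
    (F : ℕ → 𝔼 → ℂ) (hF : ∀ n, MemLp (F n) 2 volume)
    (h1 : ∀ n, eLpNorm (F n) 2 volume = 1)
    (htend : Tendsto (fun n => (∫ w in Ω, ‖amb (F n) g w.1 w.2‖ ^ p) ^ (1/p)) atTop
      (nhds (sSup (Sset g Ω p)))) :
    ∃ (φ : ℕ → ℕ) (fmax : 𝔼 → ℂ),
      StrictMono φ ∧ MemLp fmax 2 volume ∧ eLpNorm fmax 2 volume = 1 ∧
      (∫ w in Ω, ‖amb fmax g w.1 w.2‖ ^ p) ^ (1/p) = sSup (Sset g Ω p) ∧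
      Tendsto (fun n => eLpNorm (fun t => F (φ n) t - fmax t) 2 volume) atTop (nhds 0) := by
  have hp0 : (0:ℝ) < p := lt_of_lt_of_le zero_lt_one hp
  set sstar : ℝ := sSup (Sset g Ω p) with hsstar
  have hspos : 0 < sstar := sSup_Sset_pos hg hg0 hΩ0 hΩfin hp
  set fn : ℕ → H := fun n => (hF n).toLp (F n) with hfn
  have hnorm : ∀ n, ‖fn n‖ = 1 := by
    intro n
    rw [hfn, Lp.norm_toLp, h1 n, ENNReal.toReal_one]
  obtain ⟨φ, h, hφ, hh1, hw⟩ := weak_compact fn (fun n => (hnorm n).le)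
  -- the functional values converge to sstar ^ p
  have hcong : ∀ n, ∀ w : 𝔼 × 𝔼, amb (F n) g w.1 w.2 = amb (⇑(fn n)) g w.1 w.2 :=
    fun n w => amb_congr_left ((hF n).coeFn_toLp).symm g w.1 w.2
  have hIeq : ∀ n, (∫ w in Ω, ‖amb (F n) g w.1 w.2‖ ^ p)
      = ∫ w in Ω, ‖amb (⇑(fn n)) g w.1 w.2‖ ^ p := by
    intro n
    congr 1
    funext w
    rw [hcong n w]
  have hIpow : ∀ n, (∫ w in Ω, ‖amb (F n) g w.1 w.2‖ ^ p)
      = (((∫ w in Ω, ‖amb (F n) g w.1 w.2‖ ^ p) ^ (1/p)) : ℝ) ^ p := by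
    intro n
    rw [← Real.rpow_mul (integral_ambpow_nonneg g (F n) Ω p), one_div,
      inv_mul_cancel₀ hp0.ne', Real.rpow_one]
  have htendP : Tendsto (fun n => ∫ w in Ω, ‖amb (F n) g w.1 w.2‖ ^ p) atTop
      (nhds (sstar ^ p)) := by
    have hcont : Continuous (fun x : ℝ => x ^ p) := Real.continuous_rpow_const hp0.le
    have := (hcont.tendsto sstar).comp htend
    refine this.congr fun n => ?_
    exact (hIpow n).symm
  have htendsub : Tendsto (fun n => ∫ w in Ω, ‖amb (⇑(fn (φ n))) g w.1 w.2‖ ^ p) atTop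
      (nhds (sstar ^ p)) := by
    have := htendP.comp hφ.tendsto_atTop
    refine this.congr fun n => ?_
    exact hIeq (φ n)
  have hPhih : (∫ w in Ω, ‖amb (⇑h) g w.1 w.2‖ ^ p) = sstar ^ p := by
    refine tendsto_nhds_unique ?_ htendsub
    exact tendsto_Phi hg hΩfin hp (fun n => (hnorm (φ n)).le) hw
  -- h is nonzero
  have hspp : 0 < sstar ^ p := Real.rpow_pos_of_pos hspos p
  have hne : h ≠ 0 := by
    intro h0
    have hz : ∀ w : 𝔼 × 𝔼, amb (⇑h) g w.1 w.2 = 0 := by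
      intro w
      have : (⇑h : 𝔼 → ℂ) =ᵐ[volume] (fun _ => (0:ℂ)) := by
        rw [h0]; exact Lp.coeFn_zero _ _ _
      rw [amb_congr_left this g w.1 w.2, amb_zero]
    have : (∫ w in Ω, ‖amb (⇑h) g w.1 w.2‖ ^ p) = 0 := by
      have : (fun w : 𝔼 × 𝔼 => ‖amb (⇑h) g w.1 w.2‖ ^ p) = fun _ => 0 := by
        funext w; rw [hz w, norm_zero, Real.zero_rpow hp0.ne']
      rw [this, integral_zero]
    rw [hPhih] at this
    linarith
  have hnpos : 0 < ‖h‖ := norm_pos_iff.2 hne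
  have hsn : eLpNorm (⇑h) 2 volume = ENNReal.ofReal ‖h‖ := by
    rw [Lp.norm_def, ENNReal.ofReal_toReal (Lp.eLpNorm_ne_top h)]
  have hsn0 : eLpNorm (⇑h) 2 volume ≠ 0 := by
    rw [hsn, ne_eq, ENNReal.ofReal_eq_zero, not_le]
    exact hnpos
  -- the value of h as an element of Sset forces ‖h‖ = 1
  have hval : (∫ w in Ω, ‖amb (⇑h) g w.1 w.2‖ ^ p) ^ (1/p) = sstar := by
    rw [hPhih, ← Real.rpow_mul hspos.le, mul_one_div, div_self hp0.ne', Real.rpow_one]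
  have hmem : sstar / ‖h‖ ∈ Sset g Ω p := by
    refine ⟨⇑h, Lp.memLp h, hsn0, ?_⟩
    rw [hval, hsn, ENNReal.toReal_ofReal hnpos.le]
  have hhge : 1 ≤ ‖h‖ := by
    have hle := le_csSup (Sset_bddAbove hg hΩfin hp) hmem
    rw [← hsstar] at hle
    rw [div_le_iff₀ hnpos] at hle
    nlinarith
  have hnorm1 : ‖h‖ = 1 := le_antisymm hh1 hhge
  -- strong convergence
  have hinner_t : Tendsto (fun n => RCLike.re (inner ℂ h (fn (φ n)) : ℂ)) atTop (nhds 1) := by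
    have hhh : (inner ℂ h h : ℂ) = 1 := by
      rw [inner_self_eq_norm_sq_to_K, hnorm1]
      norm_num
    have := (RCLike.continuous_re.tendsto _).comp (hw h)
    rw [hhh] at this
    simpa [Function.comp_def] using this
  have hsq : Tendsto (fun n => ‖fn (φ n) - h‖ ^ 2) atTop (nhds 0) := by
    have hexp : ∀ n, ‖fn (φ n) - h‖ ^ 2
        = ‖fn (φ n)‖ ^ 2 - 2 * RCLike.re (inner ℂ h (fn (φ n)) : ℂ) + ‖h‖ ^ 2 := by
      intro n
      rw [@norm_sub_sq ℂ, inner_re_symm]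
    have : (fun n => ‖fn (φ n) - h‖ ^ 2)
        = fun n => 1 - 2 * RCLike.re (inner ℂ h (fn (φ n)) : ℂ) + 1 := by
      funext n
      rw [hexp n, hnorm (φ n), hnorm1]
      norm_num
    rw [this]
    have ht : Tendsto (fun n => 1 - 2 * RCLike.re (inner ℂ h (fn (φ n)) : ℂ) + 1) atTop
        (nhds (1 - 2 * 1 + 1)) :=
      ((tendsto_const_nhds.sub (hinner_t.const_mul 2)).add tendsto_const_nhds)
    convert ht using 2
    norm_num
  have hfh : Tendsto (fun n => ‖fn (φ n) - h‖) atTop (nhds 0) := by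
    have := (Real.continuous_sqrt.tendsto 0).comp hsq
    simp only [Function.comp_def, Real.sqrt_zero] at this
    refine this.congr fun n => ?_
    exact Real.sqrt_sq (norm_nonneg _)
  refine ⟨φ, ⇑h, hφ, Lp.memLp h, by rw [hsn, hnorm1, ENNReal.ofReal_one], hval, ?_⟩
  have hfinal : ∀ n, eLpNorm (fun t => F (φ n) t - (⇑h) t) 2 volume
      = ENNReal.ofReal ‖fn (φ n) - h‖ := by
    intro n
    have e1 : (fun t => F (φ n) t - (⇑h) t) =ᵐ[volume] ⇑(fn (φ n) - h) := by
      filter_upwards [(hF (φ n)).coeFn_toLp, Lp.coeFn_sub (fn (φ n)) h] with t ht1 ht2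
      rw [ht2]
      simp only [Pi.sub_apply]
      rw [ht1]
    rw [eLpNorm_congr_ae e1, Lp.norm_def,
      ENNReal.ofReal_toReal (Lp.eLpNorm_ne_top (fn (φ n) - h))]
  have := (ENNReal.continuous_ofReal.tendsto 0).comp hfh
  simp only [Function.comp_def, ENNReal.ofReal_zero] at this
  refine this.congr fun n => ?_
  exact (hfinal n).symm

lemma amb_smul (a : ℂ) (f g : 𝔼 → ℂ) (x ω : 𝔼) :
    amb (fun t => a * f t) g x ω = a * amb f g x ω := by
  unfold amb
  rw [← integral_const_mul]
  congr 1
  funext t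
  ring

end AmbProof

open AmbProof in
theorem fixed_window_maximizer_exists {d : ℕ}
    (g : EuclideanSpace ℝ (Fin d) → ℂ)
    (hg : MemLp g 2 volume) (hg0 : eLpNorm g 2 volume ≠ 0)
    (Ω : Set (EuclideanSpace ℝ (Fin d) × EuclideanSpace ℝ (Fin d)))
    (hΩm : MeasurableSet Ω) (hΩ0 : 0 < volume Ω) (hΩfin : volume Ω < ⊤)
    (p : ℝ) (hp : 1 ≤ p) :
    (∃ f : EuclideanSpace ℝ (Fin d) → ℂ,
        MemLp f 2 volume ∧ eLpNorm f 2 volume ≠ 0 ∧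
        (∫ w in Ω, ‖amb f g w.1 w.2‖ ^ p) ^ (1/p) / (eLpNorm f 2 volume).toReal
          = sSup {r : ℝ | ∃ f' : EuclideanSpace ℝ (Fin d) → ℂ,
              MemLp f' 2 volume ∧ eLpNorm f' 2 volume ≠ 0 ∧
              r = (∫ w in Ω, ‖amb f' g w.1 w.2‖ ^ p) ^ (1/p)
                    / (eLpNorm f' 2 volume).toReal}) ∧
    (∀ F : ℕ → EuclideanSpace ℝ (Fin d) → ℂ,
      (∀ n, MemLp (F n) 2 volume) → (∀ n, eLpNorm (F n) 2 volume = 1) →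
      Tendsto (fun n => (∫ w in Ω, ‖amb (F n) g w.1 w.2‖ ^ p) ^ (1/p)) atTop
        (nhds (sSup {r : ℝ | ∃ f' : EuclideanSpace ℝ (Fin d) → ℂ,
              MemLp f' 2 volume ∧ eLpNorm f' 2 volume ≠ 0 ∧
              r = (∫ w in Ω, ‖amb f' g w.1 w.2‖ ^ p) ^ (1/p)
                    / (eLpNorm f' 2 volume).toReal})) →
      ∃ (φ : ℕ → ℕ) (fmax : EuclideanSpace ℝ (Fin d) → ℂ),
        StrictMono φ ∧ MemLp fmax 2 volume ∧ eLpNorm fmax 2 volume = 1 ∧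
        (∫ w in Ω, ‖amb fmax g w.1 w.2‖ ^ p) ^ (1/p)
          = sSup {r : ℝ | ∃ f' : EuclideanSpace ℝ (Fin d) → ℂ,
              MemLp f' 2 volume ∧ eLpNorm f' 2 volume ≠ 0 ∧
              r = (∫ w in Ω, ‖amb f' g w.1 w.2‖ ^ p) ^ (1/p)
                    / (eLpNorm f' 2 volume).toReal} ∧
        Tendsto (fun n => eLpNorm (fun t => F (φ n) t - fmax t) 2 volume)
          atTop (nhds 0)) := by
  have hsetid : {r : ℝ | ∃ f' : EuclideanSpace ℝ (Fin d) → ℂ,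
      MemLp f' 2 volume ∧ eLpNorm f' 2 volume ≠ 0 ∧
      r = (∫ w in Ω, ‖amb f' g w.1 w.2‖ ^ p) ^ (1/p)
            / (eLpNorm f' 2 volume).toReal} = Sset g Ω p := rfl
  rw [hsetid]
  have hp0 : (0:ℝ) < p := lt_of_lt_of_le zero_lt_one hp
  constructor
  · -- existence of a maximizer
    obtain ⟨R, hmono, hRt, hRmem⟩ :=
      exists_seq_tendsto_sSup (Sset_nonempty (Ω := Ω) (p := p) hg hg0)
        (Sset_bddAbove hg hΩfin hp)
    choose f' hf'1 hf'2 hf'3 using hRmem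
    set c : ℕ → ℝ := fun n => (eLpNorm (f' n) 2 volume).toReal with hc
    have hcpos : ∀ n, 0 < c n := fun n => ENNReal.toReal_pos (hf'2 n) (hf'1 n).2.ne
    set fl : ℕ → Lp (α := EuclideanSpace ℝ (Fin d)) ℂ 2 volume :=
      fun n => (((c n)⁻¹ : ℝ) : ℂ) • (hf'1 n).toLp (f' n) with hfl
    have hnfl : ∀ n, ‖fl n‖ = 1 := by
      intro n
      rw [hfl]
      simp only [norm_smul, Complex.norm_real, Real.norm_eq_abs]
      rw [Lp.norm_toLp, _root_.abs_of_nonneg (inv_nonneg.2 (hcpos n).le)]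
      exact inv_mul_cancel₀ (hcpos n).ne'
    have help : ∀ n, eLpNorm (⇑(fl n)) 2 volume = 1 := by
      intro n
      rw [← ENNReal.ofReal_one, ← hnfl n, Lp.norm_def,
        ENNReal.ofReal_toReal (Lp.eLpNorm_ne_top (fl n))]
    have hratio : ∀ n, (∫ w in Ω, ‖amb (⇑(fl n)) g w.1 w.2‖ ^ p) ^ (1/p) = R n := by
      intro n
      have hae : (⇑(fl n) : EuclideanSpace ℝ (Fin d) → ℂ) =ᵐ[volume]
          fun t => (((c n)⁻¹ : ℝ) : ℂ) * (((hf'1 n).toLp (f' n) : _) t) := by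
        filter_upwards [Lp.coeFn_smul ((((c n)⁻¹ : ℝ)) : ℂ) ((hf'1 n).toLp (f' n))] with t ht
        rw [hfl]
        simpa using ht
      have hKey : ∀ w : EuclideanSpace ℝ (Fin d) × EuclideanSpace ℝ (Fin d),
          amb (⇑(fl n)) g w.1 w.2 = (((c n)⁻¹ : ℝ) : ℂ) * amb (f' n) g w.1 w.2 := by
        intro w
        rw [amb_congr_left hae g w.1 w.2, amb_smul]
        congr 1
        exact amb_congr_left ((hf'1 n).coeFn_toLp) g w.1 w.2
      have hIeq : (∫ w in Ω, ‖amb (⇑(fl n)) g w.1 w.2‖ ^ p)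
          = ((c n)⁻¹) ^ p * ∫ w in Ω, ‖amb (f' n) g w.1 w.2‖ ^ p := by
        rw [← integral_const_mul]
        congr 1
        funext w
        rw [hKey w, norm_mul, Complex.norm_real, Real.norm_eq_abs,
          _root_.abs_of_nonneg (inv_nonneg.2 (hcpos n).le),
          Real.mul_rpow (inv_nonneg.2 (hcpos n).le) (norm_nonneg _)]
      rw [hIeq, Real.mul_rpow (Real.rpow_nonneg (inv_nonneg.2 (hcpos n).le) p)
          (integral_ambpow_nonneg g (f' n) Ω p),
        ← Real.rpow_mul (inv_nonneg.2 (hcpos n).le), mul_one_div, div_self hp0.ne',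
        Real.rpow_one, hf'3 n, inv_mul_eq_div]
    have htendF : Tendsto (fun n => (∫ w in Ω, ‖amb (⇑(fl n)) g w.1 w.2‖ ^ p) ^ (1/p))
        atTop (nhds (sSup (Sset g Ω p))) := by
      have : (fun n => (∫ w in Ω, ‖amb (⇑(fl n)) g w.1 w.2‖ ^ p) ^ (1/p)) = R :=
        funext hratio
      rw [this]
      exact hRt
    obtain ⟨φ, fmax, hφ, hm1, hm2, hm3, hm4⟩ :=
      subseq_lemma hg hg0 hΩ0 hΩfin hp (fun n => ⇑(fl n)) (fun n => Lp.memLp _) help htendF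
    refine ⟨fmax, hm1, by rw [hm2]; exact one_ne_zero, ?_⟩
    rw [hm2, ENNReal.toReal_one, div_one]
    exact hm3
  · -- compactness of maximizing sequences
    intro F hF h1 htend
    exact subseq_lemma hg hg0 hΩ0 hΩfin hp F hF h1 htend
end

section
/- The functional f ↦ ‖A(f,g)‖_{L^p(Ω)} is sequentially weakly continuous on L^2(R^d): if f^{(n)} ⇀ f weakly in L^2(R^d) then ‖A(f^{(n)}, g)‖_{L^p(Ω)} → ‖A(f,g)‖_{L^p(Ω)}, for any fixed g ∈ L^2(R^d), Ω ⊂ R^{2d} of finite measure, and 1 ≤ p < ∞. -/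
open MeasureTheory Complex Filter Real

section Aux
variable {d : ℕ}

local notation "Ed" => EuclideanSpace ℝ (Fin d)

lemma tfShift_norm (x ω : Ed) (g : Ed → ℂ) (t : Ed) :
    ‖tfShift x ω g t‖ = ‖g (t - x)‖ := by
  rw [tfShift, norm_mul, Complex.norm_exp]
  simp [Complex.mul_re]

lemma tfShift_aesm {g : Ed → ℂ} (hg : AEStronglyMeasurable g volume) (x ω : Ed) :
    AEStronglyMeasurable (tfShift x ω g) volume := by
  have h1 : AEStronglyMeasurable (fun t : Ed => g (t - x)) volume :=
    hg.comp_quasiMeasurePreserving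
      (measurePreserving_sub_right volume x).quasiMeasurePreserving
  have h2 : Continuous fun t : Ed =>
      Complex.exp ((2 * Real.pi * Complex.I) * ((inner ℝ t ω : ℝ) : ℂ)) := by
    exact Complex.continuous_exp.comp <| continuous_const.mul <|
      Complex.continuous_ofReal.comp <| (continuous_id.inner continuous_const)
  exact h2.aestronglyMeasurable.mul h1

lemma tfShift_eLpNorm {g : Ed → ℂ} (hg : AEStronglyMeasurable g volume) (x ω : Ed) :
    eLpNorm (tfShift x ω g) 2 volume = eLpNorm g 2 volume := by
  have h1 : eLpNorm (tfShift x ω g) 2 volume = eLpNorm (fun t : Ed => g (t - x)) 2 volume := by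
    apply eLpNorm_congr_norm_ae
    exact Filter.Eventually.of_forall fun t => tfShift_norm x ω g t
  rw [h1]
  exact eLpNorm_comp_measurePreserving hg (measurePreserving_sub_right volume x)

lemma tfShift_memLp {g : Ed → ℂ} (hg : MemLp g 2 volume) (x ω : Ed) :
    MemLp (tfShift x ω g) 2 volume :=
  ⟨tfShift_aesm hg.1 x ω, by rw [tfShift_eLpNorm hg.1 x ω]; exact hg.2⟩

lemma int_mul_conj {h ψ : Ed → ℂ} (hh : MemLp h 2 volume) (hψ : MemLp ψ 2 volume) :
    Integrable (fun t => h t * (starRingEnd ℂ) (ψ t)) volume := by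
  have := MeasureTheory.L2.integrable_inner (𝕜 := ℂ) (hψ.toLp ψ) (hh.toLp h)
  apply this.congr
  filter_upwards [hψ.coeFn_toLp, hh.coeFn_toLp] with t h1 h2
  simp [RCLike.inner_apply, h1, h2, mul_comm]

lemma inner_toLp_eq {h ψ : Ed → ℂ} (hh : MemLp h 2 volume) (hψ : MemLp ψ 2 volume) :
    (inner ℂ (hψ.toLp ψ) (hh.toLp h) : ℂ) = ∫ t, h t * (starRingEnd ℂ) (ψ t) := by
  rw [MeasureTheory.L2.inner_def]
  apply integral_congr_ae
  filter_upwards [hψ.coeFn_toLp, hh.coeFn_toLp] with t h1 h2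
  simp [RCLike.inner_apply, h1, h2, mul_comm]

lemma amb_eq (h g : Ed → ℂ) (x ω : Ed) :
    amb h g x ω = Complex.exp ((Real.pi * Complex.I) * ((inner ℝ x ω : ℝ) : ℂ)) *
      ∫ s, h s * (starRingEnd ℂ) (tfShift x ω g s) := by
  set c : Ed := (2:ℝ)⁻¹ • x with hc
  rw [amb, ← integral_sub_right_eq_self (fun t : Ed =>
      h (t + c) * (starRingEnd ℂ) (g (t - c)) *
        Complex.exp (-(2 * Real.pi * Complex.I) * ((inner ℝ t ω : ℝ) : ℂ))) c,
    ← integral_const_mul]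
  congr 1
  funext s
  have h1 : s - c + c = s := by module
  have h2 : s - c - c = s - x := by rw [hc]; module
  have h3 : (inner ℝ (s - c) ω : ℝ) = (inner ℝ s ω : ℝ) - 2⁻¹ * (inner ℝ x ω : ℝ) := by
    rw [hc, inner_sub_left, real_inner_smul_left]
  have hconj : (starRingEnd ℂ) (Complex.exp ((2 * Real.pi * Complex.I) *
      ((inner ℝ s ω : ℝ) : ℂ))) = Complex.exp (-(2 * Real.pi * Complex.I) *
      ((inner ℝ s ω : ℝ) : ℂ)) := by
    rw [← Complex.exp_conj]
    congr 1
    simp only [map_mul, Complex.conj_I, Complex.conj_ofReal, map_ofNat]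
    ring
  simp only [h1, h2, h3]
  rw [tfShift, map_mul, hconj]
  rw [show (-(2 * (Real.pi:ℂ) * Complex.I) * (((inner ℝ s ω : ℝ) - 2⁻¹ * (inner ℝ x ω : ℝ) : ℝ) : ℂ))
      = ((Real.pi:ℂ) * Complex.I) * ((inner ℝ x ω : ℝ) : ℂ) +
        (-(2 * (Real.pi:ℂ) * Complex.I) * ((inner ℝ s ω : ℝ) : ℂ)) by push_cast; ring,
    Complex.exp_add]
  ring

end Aux

section Aux2
variable {d : ℕ}
local notation "Ed" => EuclideanSpace ℝ (Fin d)

lemma shear_mp (sgn : ℝ) : MeasurePreserving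
    (fun q : (Ed × Ed) × Ed => (q.1, q.2 + sgn • q.1.1))
    ((volume : Measure (Ed × Ed)).prod (volume : Measure Ed))
    ((volume : Measure (Ed × Ed)).prod (volume : Measure Ed)) := by
  apply (MeasurePreserving.id (volume : Measure (Ed × Ed))).skew_product
    (g := fun (w : Ed × Ed) (t : Ed) => t + sgn • w.1)
  · exact (continuous_snd.add ((continuous_fst.fst).const_smul sgn)).measurable
  · exact Filter.Eventually.of_forall fun w =>
      (measurePreserving_add_right volume (sgn • w.1)).map_eq

lemma amb_aesm {h g : Ed → ℂ} (hh : AEStronglyMeasurable h volume)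
    (hg : AEStronglyMeasurable g volume) :
    AEStronglyMeasurable (fun w : Ed × Ed => amb h g w.1 w.2) volume := by
  have key : AEStronglyMeasurable (fun q : (Ed × Ed) × Ed =>
      h (q.2 + (2:ℝ)⁻¹ • q.1.1) * (starRingEnd ℂ) (g (q.2 - (2:ℝ)⁻¹ • q.1.1)) *
        Complex.exp (-(2 * Real.pi * Complex.I) * ((inner ℝ q.2 q.1.2 : ℝ) : ℂ)))
      ((volume : Measure (Ed × Ed)).prod (volume : Measure Ed)) := by
    have hA : AEStronglyMeasurable (fun q : (Ed × Ed) × Ed => h (q.2 + (2:ℝ)⁻¹ • q.1.1))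
        ((volume : Measure (Ed × Ed)).prod (volume : Measure Ed)) := by
      have := (hh.comp_quasiMeasurePreserving
        (MeasureTheory.Measure.quasiMeasurePreserving_snd
          (μ := (volume : Measure (Ed × Ed))) (ν := (volume : Measure Ed))))
      exact this.comp_quasiMeasurePreserving (shear_mp ((2:ℝ)⁻¹)).quasiMeasurePreserving
    have hB : AEStronglyMeasurable
        (fun q : (Ed × Ed) × Ed => (starRingEnd ℂ) (g (q.2 - (2:ℝ)⁻¹ • q.1.1)))
        ((volume : Measure (Ed × Ed)).prod (volume : Measure Ed)) := by
      have := (hg.comp_quasiMeasurePreserving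
        (MeasureTheory.Measure.quasiMeasurePreserving_snd
          (μ := (volume : Measure (Ed × Ed))) (ν := (volume : Measure Ed))))
      have h2 := this.comp_quasiMeasurePreserving (shear_mp (-(2:ℝ)⁻¹)).quasiMeasurePreserving
      refine Complex.continuous_conj.comp_aestronglyMeasurable (h2.congr ?_)
      refine Filter.Eventually.of_forall fun q => ?_
      simp only [Function.comp]
      congr 1
      module
    have hC : Continuous fun q : (Ed × Ed) × Ed =>
        Complex.exp (-(2 * Real.pi * Complex.I) * ((inner ℝ q.2 q.1.2 : ℝ) : ℂ)) := by
      exact Complex.continuous_exp.comp <| continuous_const.mul <|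
        Complex.continuous_ofReal.comp <| (continuous_snd.inner (continuous_fst.snd))
    exact (hA.mul hB).mul hC.aestronglyMeasurable
  exact key.integral_prod_right'

end Aux2

theorem functional_weakly_continuous {d : ℕ}
    (g : EuclideanSpace ℝ (Fin d) → ℂ) (hg : MemLp g 2 volume)
    (Ω : Set (EuclideanSpace ℝ (Fin d) × EuclideanSpace ℝ (Fin d)))
    (hΩm : MeasurableSet Ω) (hΩfin : volume Ω < ⊤)
    (p : ℝ) (hp : 1 ≤ p)
    (F : ℕ → EuclideanSpace ℝ (Fin d) → ℂ) (hF : ∀ n, MemLp (F n) 2 volume)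
    (f : EuclideanSpace ℝ (Fin d) → ℂ) (hf : MemLp f 2 volume)
    (hweak : ∀ ψ : EuclideanSpace ℝ (Fin d) → ℂ, MemLp ψ 2 volume →
      Tendsto (fun n => ∫ t, (F n t - f t) * (starRingEnd ℂ) (ψ t)) atTop (nhds 0)) :
    Tendsto (fun n => (∫ w in Ω, ‖amb (F n) g w.1 w.2‖ ^ p) ^ (1/p)) atTop
      (nhds ((∫ w in Ω, ‖amb f g w.1 w.2‖ ^ p) ^ (1/p))) := by
  have hp0 : (0:ℝ) ≤ p := le_trans zero_le_one hp
  -- Banach–Steinhaus: uniform bound on the L² norms of `F n`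
  have hpt : ∀ ψ' : Lp ℂ 2 (volume : Measure (EuclideanSpace ℝ (Fin d))),
      ∃ C, ∀ n, ‖(innerSL ℂ ((hF n).toLp (F n))) ψ'‖ ≤ C := by
    intro ψ'
    have hψm : MemLp (⇑ψ') 2 volume := Lp.memLp ψ'
    have hSn : ∀ n, (innerSL ℂ ((hF n).toLp (F n))) ψ'
        = (starRingEnd ℂ) (∫ t, F n t * (starRingEnd ℂ) (ψ' t)) := by
      intro n
      have h1 := inner_toLp_eq (hF n) hψm
      rw [MeasureTheory.Lp.toLp_coeFn _ hψm] at h1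
      rw [innerSL_apply_apply, ← inner_conj_symm, h1]
    have hTend : Tendsto (fun n => ∫ t, F n t * (starRingEnd ℂ) (ψ' t)) atTop
        (nhds (0 + ∫ t, f t * (starRingEnd ℂ) (ψ' t))) := by
      refine ((hweak (⇑ψ') hψm).add tendsto_const_nhds).congr fun n => ?_
      have hint : Integrable (fun t => (F n t - f t) * (starRingEnd ℂ) (ψ' t)) volume :=
        int_mul_conj ((hF n).sub hf) hψm
      rw [← integral_add hint (int_mul_conj hf hψm)]
      apply integral_congr_ae
      filter_upwards with t
      ring
    obtain ⟨C, hC⟩ := hTend.norm.bddAbove_range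
    refine ⟨C, fun n => ?_⟩
    rw [hSn n, RCLike.norm_conj]
    exact hC (Set.mem_range_self n)
  obtain ⟨M, hM⟩ := banach_steinhaus hpt
  have hFnorm : ∀ n, ‖(hF n).toLp (F n)‖ ≤ M := fun n => by
    rw [← innerSL_apply_norm (𝕜 := ℂ)]; exact hM n
  set c2 : ℝ := (eLpNorm g 2 volume).toReal with hc2
  -- uniform bound on amb
  have hexp1 : ∀ x ω : EuclideanSpace ℝ (Fin d),
      ‖Complex.exp ((Real.pi * Complex.I) * ((inner ℝ x ω : ℝ) : ℂ))‖ = 1 := by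
    intro x ω
    rw [Complex.norm_exp]
    simp [Complex.mul_re]
  have hbound : ∀ n (x ω : EuclideanSpace ℝ (Fin d)), ‖amb (F n) g x ω‖ ≤ c2 * M := by
    intro n x ω
    have hψ := tfShift_memLp hg x ω
    rw [amb_eq, norm_mul, hexp1, one_mul, ← inner_toLp_eq (hF n) hψ]
    calc ‖(inner ℂ (hψ.toLp _) ((hF n).toLp (F n)) : ℂ)‖
        ≤ ‖hψ.toLp _‖ * ‖(hF n).toLp (F n)‖ := norm_inner_le_norm _ _
      _ ≤ c2 * M := by
          refine mul_le_mul ?_ (hFnorm n) (norm_nonneg _) ?_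
          · rw [MeasureTheory.Lp.norm_toLp, tfShift_eLpNorm hg.1]
          · exact ENNReal.toReal_nonneg
  -- pointwise convergence of amb
  have hptw : ∀ x ω : EuclideanSpace ℝ (Fin d),
      Tendsto (fun n => amb (F n) g x ω) atTop (nhds (amb f g x ω)) := by
    intro x ω
    have hψ := tfShift_memLp hg x ω
    have h1 := (hweak (tfShift x ω g) hψ).const_mul
      (Complex.exp ((Real.pi * Complex.I) * ((inner ℝ x ω : ℝ) : ℂ)))
    rw [mul_zero] at h1
    have h2 := h1.add (tendsto_const_nhds (x := amb f g x ω))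
    rw [zero_add] at h2
    refine h2.congr fun n => ?_
    rw [amb_eq (F n) g x ω, amb_eq f g x ω]
    have h3 : ∫ t, (F n t - f t) * (starRingEnd ℂ) (tfShift x ω g t)
        = (∫ t, F n t * (starRingEnd ℂ) (tfShift x ω g t))
          - ∫ t, f t * (starRingEnd ℂ) (tfShift x ω g t) := by
      rw [← integral_sub (int_mul_conj (hF n) hψ) (int_mul_conj hf hψ)]
      apply integral_congr_ae
      filter_upwards with t
      ring
    rw [h3]
    ring
  -- dominated convergence
  have hfinite : IsFiniteMeasure (volume.restrict Ω) :=
    ⟨by rwa [Measure.restrict_apply_univ]⟩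
  have h_main : Tendsto (fun n => ∫ w in Ω, ‖amb (F n) g w.1 w.2‖ ^ p) atTop
      (nhds (∫ w in Ω, ‖amb f g w.1 w.2‖ ^ p)) := by
    apply tendsto_integral_of_dominated_convergence (bound := fun _ => (c2 * M) ^ p)
    · intro n
      exact ((Real.continuous_rpow_const hp0).comp_aestronglyMeasurable
        (amb_aesm (hF n).1 hg.1).norm).restrict
    · exact integrable_const _
    · intro n
      refine Filter.Eventually.of_forall fun w => ?_
      rw [Real.norm_eq_abs, _root_.abs_of_nonneg (Real.rpow_nonneg (norm_nonneg _) p)]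
      exact Real.rpow_le_rpow (norm_nonneg _) (hbound n w.1 w.2) hp0
    · refine Filter.Eventually.of_forall fun w => ?_
      exact ((hptw w.1 w.2).norm).rpow_const (Or.inr hp0)
  exact h_main.rpow_const (Or.inr (by positivity))
end
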